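/- Let R be a domain, r a finitary ideal system on R, n ∈ ℕ₀, and I₁, …, I_n nonzero r-ideals of R that are pairwise r-coprime. Then (I₁ ⋯ I_n)_r = I₁ ∩ ⋯ ∩ I_n. -/

import Mathlib

open Pointwise

/-- An ideal system `r` on an integral domain `R`, with the standing convention that
every `r`-ideal is an ordinary ring ideal (`I_r(R) ⊆ I(R)`). The map `cl` is the
closure `X ↦ X_r`. -/
structure IdealSystem (R : Type*) [CommRing R] [IsDomain R] where
  cl : Set R → Set R
  subset_cl : ∀ X : Set R, X ⊆ cl X
  cl_mono : ∀ X Y : Set R, X ⊆ cl Y → cl X ⊆ cl Y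
  principal_subset : ∀ c : R, {x : R | ∃ y : R, x = c * y} ⊆ cl {c}
  smul_cl : ∀ (c : R) (X : Set R), c • cl X = cl (c • X)
  zero_mem : ∀ X : Set R, (0 : R) ∈ cl X
  add_mem : ∀ X : Set R, ∀ a ∈ cl X, ∀ b ∈ cl X, a + b ∈ cl X
  mul_mem : ∀ (X : Set R) (r : R), ∀ a ∈ cl X, r * a ∈ cl X

variable {R : Type*} [CommRing R] [IsDomain R]

/-- `I` is a nonzero `r`-ideal, i.e. an element of the semigroup `I_r(R)`. -/
def IdealSystem.IsRIdeal (rs : IdealSystem R) (I : Set R) : Prop :=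
  rs.cl I = I ∧ I ≠ {0}

/-- Two `r`-ideals are `r`-coprime if `R` is the only `r`-ideal containing both. -/
def IdealSystem.RCoprime (rs : IdealSystem R) (I J : Set R) : Prop :=
  ∀ C : Set R, rs.cl C = C → I ⊆ C → J ⊆ C → C = Set.univ

namespace IdealSystem

lemma cl_mono' (rs : IdealSystem R) {X Y : Set R} (h : X ⊆ Y) : rs.cl X ⊆ rs.cl Y :=
  rs.cl_mono X Y (h.trans (rs.subset_cl Y))

lemma cl_cl (rs : IdealSystem R) (X : Set R) : rs.cl (rs.cl X) = rs.cl X :=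
  Set.Subset.antisymm (rs.cl_mono _ _ subset_rfl) (rs.subset_cl _)

/-- Key step: coprimality (in the `1 ∈ cl (A ∪ ·)` form) is multiplicative. -/
lemma one_mem_cl_union_mul (rs : IdealSystem R) {A B C : Set R} (hA : rs.cl A = A)
    (hB : (1 : R) ∈ rs.cl (A ∪ B)) (hC : (1 : R) ∈ rs.cl (A ∪ C)) :
    (1 : R) ∈ rs.cl (A ∪ B * C) := by
  have key : ∀ x ∈ rs.cl (A ∪ B), x • rs.cl (A ∪ C) ⊆ rs.cl (A ∪ B * C) := by
    intro x hx
    rw [rs.smul_cl]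
    apply rs.cl_mono
    rintro y ⟨z, hz, rfl⟩
    rcases hz with hz | hz
    · -- z ∈ A, so x * z ∈ A
      have : x * z ∈ rs.cl A := rs.mul_mem A x z (rs.subset_cl A hz)
      rw [hA] at this
      exact rs.subset_cl _ (Or.inl this)
    · -- z ∈ C
      have hsub : z • (A ∪ B) ⊆ rs.cl (A ∪ B * C) := by
        rintro w ⟨v, hv, rfl⟩
        rcases hv with hv | hv
        · have : z * v ∈ rs.cl A := rs.mul_mem A z v (rs.subset_cl A hv)
          rw [hA] at this
          exact rs.subset_cl _ (Or.inl this)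
        · exact rs.subset_cl _ (Or.inr ⟨v, hv, z, hz, mul_comm v z⟩)
      have hmem : x * z ∈ z • rs.cl (A ∪ B) := ⟨x, hx, mul_comm z x⟩
      rw [rs.smul_cl] at hmem
      exact rs.cl_mono _ _ hsub hmem
  have := key 1 hB ⟨1, hC, rfl⟩
  simpa using this

lemma one_mem_cl_union_prod (rs : IdealSystem R) {ι : Type*} [DecidableEq ι] {J : Set R}
    (hJ : rs.cl J = J) (F : ι → Set R) (s : Finset ι)
    (h : ∀ i ∈ s, (1 : R) ∈ rs.cl (J ∪ F i)) :
    (1 : R) ∈ rs.cl (J ∪ ∏ i ∈ s, F i) := by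
  induction s using Finset.induction with
  | empty =>
    simp only [Finset.prod_empty]
    exact rs.subset_cl _ (Or.inr (by simp [Set.mem_one]))
  | insert _ _ hnotmem ih =>
    rename_i a s
    rw [Finset.prod_insert hnotmem]
    exact rs.one_mem_cl_union_mul hJ (h a (Finset.mem_insert_self a s))
      (ih fun i hi => h i (Finset.mem_insert_of_mem hi))

/-- The two-ideal case. -/
lemma cl_mul_of_one_mem (rs : IdealSystem R) {P J : Set R} (hJ : rs.cl J = J)
    (h1 : (1 : R) ∈ rs.cl (J ∪ P)) : rs.cl (P * J) = rs.cl P ∩ J := by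
  apply Set.Subset.antisymm
  · have hsub : P * J ⊆ rs.cl P ∩ J := by
      rintro w ⟨p, hp, j, hj, rfl⟩
      constructor
      · have : j * p ∈ rs.cl P := rs.mul_mem P j p (rs.subset_cl P hp)
        rwa [mul_comm] at this
      · have : p * j ∈ rs.cl J := rs.mul_mem J p j (rs.subset_cl J hj)
        rwa [hJ] at this
    have hclosed : rs.cl (rs.cl P ∩ J) = rs.cl P ∩ J := by
      apply Set.Subset.antisymm _ (rs.subset_cl _)
      intro x hx
      constructor
      · exact (rs.cl_cl P) ▸ rs.cl_mono' (Set.inter_subset_left) hx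
      · exact hJ ▸ rs.cl_mono' (Set.inter_subset_right) hx
    rw [← hclosed]
    exact rs.cl_mono' hsub
  · rintro x ⟨hxP, hxJ⟩
    have hsub : x • (J ∪ P) ⊆ rs.cl (P * J) := by
      rintro w ⟨v, hv, rfl⟩
      rcases hv with hv | hv
      · -- v ∈ J : x * v ∈ v • cl P = cl (v • P) ⊆ cl (P * J)
        have hmem : x * v ∈ v • rs.cl P := ⟨x, hxP, mul_comm v x⟩
        rw [rs.smul_cl] at hmem
        refine rs.cl_mono _ _ ?_ hmem
        rintro w ⟨p, hp, rfl⟩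
        exact rs.subset_cl _ ⟨p, hp, v, hv, mul_comm p v⟩
      · -- v ∈ P : x * v ∈ P * J
        exact rs.subset_cl _ ⟨v, hv, x, hxJ, mul_comm v x⟩
    have hmem : x ∈ x • rs.cl (J ∪ P) := ⟨1, h1, mul_one x⟩
    rw [rs.smul_cl] at hmem
    exact rs.cl_mono _ _ hsub hmem

end IdealSystem

/-- Let `r` be a finitary ideal system on the domain `R` and `I₁, …, I_n` pairwise
`r`-coprime nonzero `r`-ideals. Then `(I₁ ⋯ I_n)_r = I₁ ∩ ⋯ ∩ I_n`. -/
theorem cl_prod_eq_iInter_of_pairwise_rCoprime (rs : IdealSystem R)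
    (hfin : ∀ (X : Set R), ∀ x ∈ rs.cl X, ∃ E : Finset R, ↑E ⊆ X ∧ x ∈ rs.cl ↑E)
    (n : ℕ) (I : Fin n → Set R) (hI : ∀ i, rs.IsRIdeal (I i))
    (hcop : ∀ i j, i ≠ j → rs.RCoprime (I i) (I j)) :
    rs.cl (∏ i, I i) = ⋂ i, I i := by
  induction n with
  | zero =>
    simp only [Finset.univ_eq_empty, Finset.prod_empty, Set.iInter_of_empty]
    apply Set.Subset.antisymm (Set.subset_univ _)
    intro x _
    exact rs.cl_mono' (by intro y hy; simp_all [Set.mem_one]) (rs.principal_subset 1 ⟨x, (one_mul x).symm⟩)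
  | succ n ih =>
    have ihA := ih (fun i => I i.castSucc) (fun i => hI _)
      (fun i j hij => hcop _ _ (fun h => hij (Fin.castSucc_injective n h)))
    rw [Fin.prod_univ_castSucc]
    have hcopr : ∀ i : Fin n, (1 : R) ∈ rs.cl (I (Fin.last n) ∪ I i.castSucc) := by
      intro i
      have hne : I (Fin.last n) ≠ I i.castSucc → True := fun _ => trivial
      have huniv : rs.cl (I (Fin.last n) ∪ I i.castSucc) = Set.univ := by
        refine hcop (Fin.last n) i.castSucc (Fin.castSucc_lt_last i).ne' _ (rs.cl_cl _) ?_ ?_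
        · exact (Set.subset_union_left).trans (rs.subset_cl _)
        · exact (Set.subset_union_right).trans (rs.subset_cl _)
      rw [huniv]; trivial
    have h1 : (1 : R) ∈ rs.cl (I (Fin.last n) ∪ ∏ i : Fin n, I i.castSucc) :=
      rs.one_mem_cl_union_prod (hI (Fin.last n)).1 (fun i => I i.castSucc) Finset.univ
        (fun i _ => hcopr i)
    rw [rs.cl_mul_of_one_mem (hI (Fin.last n)).1 h1, ihA]
    ext x
    simp only [Set.mem_inter_iff, Set.mem_iInter]
    constructor
    · rintro ⟨h1', h2'⟩ i
      induction i using Fin.lastCases with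
      | last => exact h2'
      | cast j => exact h1' j
    · intro h
      exact ⟨fun i => h _, h _⟩
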